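/- Let ℓ be an integer with 0 ≤ ℓ ≤ k and set L = 2^ℓ. For all integers q, i with L dividing q, 0 ≤ i < L, and 0 ≤ q + i < 2^k, one has ω_q · ω_i = ω_{q+i}. -/
import Mathlib


/-- The length-`k` bit-reversal of `s`: if `s = Σ_{i<k} b_i 2^i` with `b_i ∈ {0,1}`,
then `rev k s = Σ_{i<k} b_i 2^(k-1-i)`. -/
def rev (k s : ℕ) : ℕ := ∑ i ∈ Finset.range k, (s / 2 ^ i % 2) * 2 ^ (k - 1 - i)

theorem stmt9 {R : Type*} [CommRing R] (k : ℕ) (hk : 1 ≤ k) (ω : R)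
    (hω : ω ^ 2 ^ (k - 1) = -1) (ℓ : ℕ) (hℓ : ℓ ≤ k) (q i : ℕ)
    (hq : 2 ^ ℓ ∣ q) (hi : i < 2 ^ ℓ) (hqi : q + i < 2 ^ k) :
    ω ^ rev k q * ω ^ rev k i = ω ^ rev k (q + i) := by
  have hdigit : ∀ j : ℕ, (q + i) / 2 ^ j % 2 = q / 2 ^ j % 2 + i / 2 ^ j % 2 := by
    intro j
    by_cases hj : j < ℓ
    · obtain ⟨c, hc⟩ := (pow_dvd_pow 2 hj).trans hq
      have h1 : (q + i) / 2 ^ j = 2 * c + i / 2 ^ j := by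
        rw [hc, pow_succ]
        rw [show 2 ^ j * 2 * c + i = 2 ^ j * (2 * c) + i by ring]
        rw [Nat.mul_add_div (by positivity)]
      have h2 : q / 2 ^ j = 2 * c := by
        rw [hc, pow_succ, show 2 ^ j * 2 * c = 2 ^ j * (2 * c) by ring,
          Nat.mul_div_cancel_left _ (by positivity)]
      omega
    · push_neg at hj
      obtain ⟨c, hc⟩ := hq
      have hle : (2:ℕ) ^ ℓ ≤ 2 ^ j := Nat.pow_le_pow_right (by norm_num) hj
      have h0 : i / 2 ^ j = 0 := Nat.div_eq_of_lt (lt_of_lt_of_le hi hle)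
      have h1 : (q + i) / 2 ^ ℓ = c := by
        rw [hc, Nat.mul_add_div (by positivity), Nat.div_eq_of_lt hi, Nat.add_zero]
      have h2 : q / 2 ^ ℓ = c := by
        rw [hc, Nat.mul_div_cancel_left _ (by positivity)]
      have hsplit : (2:ℕ) ^ j = 2 ^ ℓ * 2 ^ (j - ℓ) := by
        rw [← pow_add]; congr 1; omega
      have h3 : (q + i) / 2 ^ j = q / 2 ^ j := by
        rw [hsplit, ← Nat.div_div_eq_div_mul, ← Nat.div_div_eq_div_mul, h1, h2]
      omega
  have hrev : rev k (q + i) = rev k q + rev k i := by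
    unfold rev
    rw [← Finset.sum_add_distrib]
    refine Finset.sum_congr rfl fun j _ => ?_
    rw [hdigit j, add_mul]
  rw [← pow_add, hrev]
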